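/- Let B be a disk in ℝ², D ⊂ B a convex polygon, and f ∈ C(∂B) with f(x) ≠ 0 for all x ∈ ∂B. Let u be harmonic in B \ D̄, continuous up to ∂B, with u = f on ∂B and u = 0 on ∂D. Then u cannot be extended analytically (harmonically) across any corner of D. -/

import Mathlib

open Complex Metric Set MeasureTheory Real

noncomputable def lap (u : ℂ → ℝ) (x : ℂ) : ℝ :=
  fderiv ℝ (fun y => fderiv ℝ u y 1) x 1 +
  fderiv ℝ (fun y => fderiv ℝ u y Complex.I) x Complex.I

/-- `u` is harmonic on `s`: twice differentiable with vanishing Laplacian. -/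
def HarmonicOnD (u : ℂ → ℝ) (s : Set ℂ) : Prop :=
  ContDiffOn ℝ 2 u s ∧ ∀ x ∈ s, lap u x = 0

open Topology Filter

noncomputable def gF (v : ℂ → ℝ) (y : ℂ) : ℂ :=
  ((fderiv ℝ v y 1 : ℝ) : ℂ) - ((fderiv ℝ v y Complex.I : ℝ) : ℂ) * Complex.I

lemma clm_apply_basis (T : ℂ →L[ℝ] ℝ) (E : ℂ) : T E = E.re * T 1 + E.im * T Complex.I := by
  conv_lhs => rw [show E = E.re • (1:ℂ) + E.im • Complex.I by
    simp [Complex.real_smul]]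
  rw [_root_.map_add, _root_.map_smul, _root_.map_smul]
  simp [smul_eq_mul]

lemma dir_eq (v : ℂ → ℝ) (q E : ℂ) : fderiv ℝ v q E = (E * gF v q).re := by
  rw [clm_apply_basis (fderiv ℝ v q) E]
  simp [gF, Complex.mul_re]

lemma gF_analytic {v : ℂ → ℝ} {U : Set ℂ} (hU : IsOpen U) (hv : ContDiffOn ℝ 2 v U)
    (hlap : ∀ x ∈ U, lap v x = 0) : AnalyticOnNhd ℂ (gF v) U := by
  apply DifferentiableOn.analyticOnNhd _ hU
  intro x hx
  apply DifferentiableAt.differentiableWithinAt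
  have hvx : ContDiffAt ℝ 2 v x := hv.contDiffAt (hU.mem_nhds hx)
  have hF1 : ContDiffAt ℝ 1 (fderiv ℝ v) x := hvx.fderiv_right (by norm_num)
  have hFd : DifferentiableAt ℝ (fderiv ℝ v) x := hF1.differentiableAt one_ne_zero
  set A := fderiv ℝ (fderiv ℝ v) x with hAdef
  have hA : HasFDerivAt (fderiv ℝ v) A x := hFd.hasFDerivAt
  have hev : ∀ᶠ y in 𝓝 x, HasFDerivAt v (fderiv ℝ v y) y := by
    filter_upwards [hU.mem_nhds hx] with y hy
    exact ((hv.differentiableOn (by norm_num)).differentiableAt (hU.mem_nhds hy)).hasFDerivAt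
  have hsym : ∀ a b, A a b = A b a := second_derivative_symmetric_of_eventually hev hA
  set Φ : (ℂ →L[ℝ] ℝ) →L[ℝ] ℂ :=
    (ContinuousLinearMap.apply ℝ ℝ (1:ℂ)).smulRight (1:ℂ) -
      (ContinuousLinearMap.apply ℝ ℝ Complex.I).smulRight Complex.I with hΦdef
  have hΦ : ∀ T : ℂ →L[ℝ] ℝ, Φ T = ((T 1 : ℝ) : ℂ) - ((T Complex.I : ℝ) : ℂ) * Complex.I := by
    intro T
    simp [hΦdef, Complex.real_smul]
  have hgΦ : gF v = fun y => Φ (fderiv ℝ v y) := by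
    funext y; rw [hΦ]; rfl
  have hg : HasFDerivAt (gF v) (Φ.comp A) x := by
    rw [hgΦ]
    exact Φ.hasFDerivAt.comp x hA
  have h1 : fderiv ℝ (fun y => fderiv ℝ v y 1) x =
      (ContinuousLinearMap.apply ℝ ℝ (1:ℂ)).comp A :=
    ((ContinuousLinearMap.apply ℝ ℝ (1:ℂ)).hasFDerivAt.comp x hA).fderiv
  have h2 : fderiv ℝ (fun y => fderiv ℝ v y Complex.I) x =
      (ContinuousLinearMap.apply ℝ ℝ Complex.I).comp A :=
    ((ContinuousLinearMap.apply ℝ ℝ Complex.I).hasFDerivAt.comp x hA).fderiv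
  have hl : A 1 1 + A Complex.I Complex.I = 0 := by
    have := hlap x hx
    unfold lap at this
    rw [h1, h2] at this
    simpa using this
  set B := Φ.comp A with hBdef
  have hB : ∀ e : ℂ, B e = ((A e 1 : ℝ) : ℂ) - ((A e Complex.I : ℝ) : ℂ) * Complex.I := by
    intro e; rw [hBdef]; simp [hΦ]
  have key : B Complex.I = Complex.I * B 1 := by
    rw [hB, hB]
    rw [hsym Complex.I 1, show A Complex.I Complex.I = -(A 1 1) by linarith [hl]]
    simp [Complex.ext_iff]
  have hgdR : DifferentiableAt ℝ (gF v) x := hg.differentiableAt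
  rw [differentiableAt_iff_restrictScalars ℝ hgdR]
  refine ⟨(ContinuousLinearMap.id ℂ ℂ).smulRight (B 1), ?_⟩
  rw [hg.fderiv]
  apply ContinuousLinearMap.ext
  intro w
  simp only [ContinuousLinearMap.coe_restrictScalars', ContinuousLinearMap.smulRight_apply,
    ContinuousLinearMap.coe_id', id_eq, smul_eq_mul]
  have hw : B w = (w.re : ℝ) • B 1 + (w.im : ℝ) • B Complex.I := by
    conv_lhs => rw [show w = w.re • (1:ℂ) + w.im • Complex.I by simp [Complex.real_smul]]
    rw [_root_.map_add, _root_.map_smul, _root_.map_smul]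
  rw [hw, key, Complex.real_smul, Complex.real_smul]
  conv_lhs => rw [← Complex.re_add_im w]
  ring


set_option maxHeartbeats 2000000

/-- If f is continuous and nonvanishing on the boundary circle, the solution of
the Dirichlet obstacle problem with a convex polygonal obstacle cannot be
extended harmonically across any corner (vertex) of the polygon. -/
theorem stmt3 (c : ℂ) (R : ℝ) (hR : 0 < R) (P : Finset ℂ)
    (D : Set ℂ) (hD : D = convexHull ℝ (P : Set ℂ))
    (hDB : D ⊆ ball c R) (hDi : (interior D).Nonempty)
    (hvert : ∀ z ∈ (P : Set ℂ), z ∉ convexHull ℝ ((P : Set ℂ) \ {z}))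
    (f : ℂ → ℝ) (hfc : ContinuousOn f (sphere c R))
    (hfnz : ∀ z ∈ sphere c R, f z ≠ 0)
    (u : ℂ → ℝ)
    (hu : HarmonicOnD u (ball c R \ D))
    (huc : ContinuousOn u (closure (ball c R) \ interior D))
    (huf : ∀ z ∈ sphere c R, u z = f z)
    (huz : ∀ z ∈ frontier D, u z = 0) :
    ∀ z ∈ (P : Set ℂ), ¬ ∃ V : Set ℂ, IsOpen V ∧ z ∈ V ∧
      ∃ v : ℂ → ℝ, HarmonicOnD v (V ∪ (ball c R \ D)) ∧
        Set.EqOn v u (ball c R \ D) := by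
  intro z hz
  rintro ⟨V, hVo, hzV, v, ⟨hv2, hvlap⟩, hvu⟩
  set U := V ∪ (ball c R \ D) with hUdef
  have hPfin : (P : Set ℂ).Finite := P.finite_toSet
  have hDcl : IsClosed D := by rw [hD]; exact hPfin.isClosed_convexHull (𝕜 := ℝ)
  have hDconv : Convex ℝ D := by rw [hD]; exact convex_convexHull ℝ _
  have hUo : IsOpen U := hVo.union (isOpen_ball.sdiff hDcl)
  have hzD : z ∈ D := by rw [hD]; exact subset_convexHull ℝ _ hz
  have hzB : z ∈ ball c R := hDB hzD
  -- v vanishes on frontier D ∩ V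
  have hfv : ∀ x ∈ frontier D, x ∈ V → v x = 0 := by
    intro x hxf hxV
    obtain ⟨x₀, hx₀⟩ := hDi
    have hxD : x ∈ D := by
      have := frontier_subset_closure (s := D) hxf
      rwa [hDcl.closure_eq] at this
    have hxnI : x ∉ interior D := by
      rw [hDcl.frontier_eq] at hxf; exact hxf.2
    set seq : ℝ → ℂ := fun s => x + s • (x - x₀) with hseq
    have hseqD : ∀ s : ℝ, 0 < s → seq s ∉ D := by
      intro s hs hmem
      apply hxnI
      have h1s : (0:ℝ) < 1 + s := by linarith
      have h1 : (s/(1+s)) • x₀ + (1/(1+s)) • seq s ∈ interior D :=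
        hDconv.combo_interior_closure_mem_interior hx₀ (subset_closure hmem)
          (by positivity) (by positivity) (by field_simp; ring)
      have hx' : (s/(1+s)) • x₀ + (1/(1+s)) • seq s = x := by
        have h1s' : ((1:ℂ) + s) ≠ 0 := by
          simpa using Complex.ofReal_ne_zero.mpr h1s.ne'
        simp only [hseq, Complex.real_smul, Complex.ofReal_div]
        push_cast
        field_simp
        ring
      rwa [hx'] at h1
    have hcont : Continuous seq := by
      simp only [hseq]; fun_prop
    have htend : Tendsto seq (𝓝[>] (0:ℝ)) (𝓝 x) := by
      have h0 : seq 0 = x := by simp [hseq]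
      have := hcont.tendsto 0
      rw [h0] at this
      exact this.mono_left nhdsWithin_le_nhds
    have hball : ∀ᶠ s in 𝓝[>] (0:ℝ), seq s ∈ ball c R := by
      have hmem : seq ⁻¹' (ball c R) ∈ 𝓝 (0:ℝ) := by
        apply (isOpen_ball.preimage hcont).mem_nhds
        simp only [mem_preimage, hseq]
        simpa using hDB hxD
      exact nhdsWithin_le_nhds hmem
    have hS : ∀ᶠ s in 𝓝[>] (0:ℝ), seq s ∈ closure (ball c R) \ interior D := by
      filter_upwards [hball, self_mem_nhdsWithin] with s hb hs
      exact ⟨subset_closure hb, fun h => hseqD s hs (interior_subset h)⟩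
    have htu : Tendsto (fun s => u (seq s)) (𝓝[>] (0:ℝ)) (𝓝 (u x)) := by
      have hxS : x ∈ closure (ball c R) \ interior D := ⟨subset_closure (hDB hxD), hxnI⟩
      exact (huc x hxS).tendsto.comp (tendsto_nhdsWithin_iff.mpr ⟨htend, hS⟩)
    have htv : Tendsto (fun s => v (seq s)) (𝓝[>] (0:ℝ)) (𝓝 (v x)) := by
      have : ContinuousAt v x :=
        (hv2.continuousOn.continuousAt (hUo.mem_nhds (mem_union_left _ hxV)))
      exact this.tendsto.comp htend
    have hequ : (fun s => v (seq s)) =ᶠ[𝓝[>] (0:ℝ)] (fun s => u (seq s)) := by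
      filter_upwards [hball, self_mem_nhdsWithin] with s hb hs
      exact hvu ⟨hb, hseqD s hs⟩
    have : v x = u x := tendsto_nhds_unique (htv.congr' hequ) htu
    rw [this]; exact huz x hxf
  -- geometry: separating functional and adjacent vertex
  have hPne : ((P : Set ℂ) \ {z}).Nonempty := by
    by_contra h
    rw [Set.not_nonempty_iff_eq_empty, Set.diff_eq_empty] at h
    have hsub : D ⊆ {z} := by
      rw [hD]
      calc convexHull ℝ (P : Set ℂ) ⊆ convexHull ℝ {z} := convexHull_mono h
        _ = {z} := convexHull_singleton z
    obtain ⟨y, hy⟩ := hDi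
    have := interior_mono hsub hy
    rw [interior_singleton] at this
    exact this
  have hKcl : IsClosed (convexHull ℝ ((P : Set ℂ) \ {z})) :=
    (hPfin.subset diff_subset).isClosed_convexHull (𝕜 := ℝ)
  obtain ⟨ℓ, s₀, hℓK, hℓz⟩ :=
    geometric_hahn_banach_closed_point (convex_convexHull ℝ _) hKcl (hvert z hz)
  have hℓq : ∀ q ∈ (P : Set ℂ), q ≠ z → ℓ q < ℓ z := fun q hq hne =>
    lt_trans (hℓK q (subset_convexHull ℝ _ ⟨hq, hne⟩)) hℓz
  have hℓlin : IsLinearMap ℝ fun w => ℓ w := ⟨fun a b => _root_.map_add ℓ a b, fun c a => _root_.map_smul ℓ c a⟩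
  have hℓD : ∀ x ∈ D, ℓ x ≤ ℓ z := by
    intro x hx
    rw [hD] at hx
    have hsub : convexHull ℝ (P : Set ℂ) ⊆ {w | ℓ w ≤ ℓ z} := by
      apply convexHull_min _ (convex_halfSpace_le hℓlin (ℓ z))
      intro q hq
      rcases eq_or_ne q z with rfl | h
      · exact mem_setOf.mpr le_rfl
      · exact mem_setOf.mpr (hℓq q hq h).le
    exact hsub hx
  set Pz := P.erase z with hPz
  have hPzne : Pz.Nonempty := by
    obtain ⟨q, hq, hqz⟩ := hPne
    exact ⟨q, Finset.mem_erase.mpr ⟨hqz, hq⟩⟩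
  set m : ℂ → ℝ := fun x => ℓ (Complex.I * x) with hm
  set r : ℂ → ℝ := fun q => m (q - z) / (ℓ z - ℓ q) with hrdef
  obtain ⟨w, hwPz, hwmax⟩ := Pz.exists_max_image r hPzne
  have hwP : w ∈ (P : Set ℂ) := Finset.mem_coe.mpr (Finset.mem_of_mem_erase hwPz)
  have hwz : w ≠ z := Finset.ne_of_mem_erase hwPz
  have hwD : w ∈ D := by rw [hD]; exact subset_convexHull ℝ _ hwP
  have hℓw : ℓ w < ℓ z := hℓq w hwP hwz
  set L : ℂ →L[ℝ] ℝ := ℓ.comp ((ContinuousLinearMap.mul ℝ ℂ) Complex.I) + (r w) • ℓ with hLdef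
  have hLval : ∀ x, L x = m x + r w * ℓ x := by
    intro x
    simp [hLdef, hm, smul_eq_mul]
  have hmr : ∀ q ∈ (P : Set ℂ), q ≠ z → m (q - z) = r q * (ℓ z - ℓ q) := by
    intro q hq hne
    have hpos : 0 < ℓ z - ℓ q := sub_pos.mpr (hℓq q hq hne)
    rw [hrdef]
    field_simp
  have hmlin : ∀ a b : ℂ, m (a - b) = m a - m b := by
    intro a b; simp [hm, mul_sub, _root_.map_sub]
  have hLP : ∀ x ∈ D, L x ≤ L z := by
    intro x hx
    rw [hD] at hx
    have hLlin : IsLinearMap ℝ fun w => L w := ⟨fun a b => _root_.map_add L a b, fun c a => _root_.map_smul L c a⟩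
    have hsub : convexHull ℝ (P : Set ℂ) ⊆ {w | L w ≤ L z} := by
      apply convexHull_min _ (convex_halfSpace_le hLlin (L z))
      intro q hq
      rcases eq_or_ne q z with rfl | h
      · exact mem_setOf.mpr le_rfl
      have hqPz : q ∈ Pz := Finset.mem_erase.mpr ⟨h, hq⟩
      have hpos : 0 < ℓ z - ℓ q := sub_pos.mpr (hℓq q hq h)
      have hdiff : L q - L z = (r q - r w) * (ℓ z - ℓ q) := by
        have h1 := hmr q hq h
        have h2 : m q - m z = m (q - z) := (hmlin q z).symm
        rw [hLval, hLval]
        nlinarith [h1, h2]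
      have hle : r q ≤ r w := hwmax q hqPz
      have : L q - L z ≤ 0 := by nlinarith
      simpa [Set.mem_setOf_eq] using by linarith
    exact hsub hx
  have hLw : L w = L z := by
    have h1 := hmr w hwP hwz
    have h2 : m w - m z = m (w - z) := (hmlin w z).symm
    have h3 : r w * (ℓ z - ℓ w) = m (w - z) := (h1).symm
    rw [hLval, hLval]
    nlinarith
  have hLne : ∃ y₀, 0 < L y₀ := by
    by_contra h
    push_neg at h
    have h0 : ∀ y, L y = 0 := by
      intro y
      have h1 := h y
      have h2 := h (-y)
      rw [_root_.map_neg] at h2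
      linarith
    set x₁ := z - w with hx₁
    have hx₁pos : 0 < ℓ x₁ := by
      rw [hx₁, _root_.map_sub]; linarith
    have e1 : m x₁ = -(r w * ℓ x₁) := by
      have := h0 x₁; rw [hLval] at this; linarith
    have e2 : m (Complex.I * x₁) = -(r w * ℓ (Complex.I * x₁)) := by
      have := h0 (Complex.I * x₁); rw [hLval] at this; linarith
    have e3 : m (Complex.I * x₁) = -ℓ x₁ := by
      have hii : Complex.I * (Complex.I * x₁) = -x₁ := by
        rw [← mul_assoc, Complex.I_mul_I]; ring
      simp only [hm]
      rw [hii, _root_.map_neg]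
    have e4 : ℓ (Complex.I * x₁) = m x₁ := by simp only [hm]
    rw [e3, e4, e1] at e2
    nlinarith [sq_nonneg (r w)]
  have hint : ∀ x ∈ interior D, L x < L z := by
    intro x hx
    obtain ⟨y₀, hy₀⟩ := hLne
    have hy0ne : y₀ ≠ 0 := by
      intro h; rw [h, _root_.map_zero] at hy₀; exact lt_irrefl _ hy₀
    obtain ⟨ε, hε, hb⟩ := Metric.mem_nhds_iff.mp (mem_interior_iff_mem_nhds.mp hx)
    have hnorm : 0 < ‖y₀‖ := norm_pos_iff.mpr hy0ne
    set cc := ε / (2 * ‖y₀‖) with hcc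
    have hccpos : 0 < cc := by positivity
    have hy₁D : x + cc • y₀ ∈ D := by
      apply hb
      simp only [mem_ball, dist_self_add_left]
      rw [norm_smul, Real.norm_eq_abs, abs_of_pos hccpos, hcc]
      rw [div_mul_eq_mul_div, mul_comm]
      rw [mul_div_assoc]
      calc ‖y₀‖ * (ε / (2 * ‖y₀‖)) = ε / 2 := by
            rw [mul_comm (2:ℝ) ‖y₀‖, mul_div_assoc', mul_div_mul_left _ _ hnorm.ne']
        _ < ε := by linarith
    have hLy₁ : L (x + cc • y₀) = L x + cc * L y₀ := by
      rw [_root_.map_add, _root_.map_smul]; simp [smul_eq_mul]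
    have hle := hLP _ hy₁D
    nlinarith
  -- the edge direction and the ray
  set E := z - w with hEdef
  have hEne : E ≠ 0 := sub_ne_zero.mpr (Ne.symm hwz)
  set p : ℝ → ℂ := fun t => z + t • E with hpdef
  have hpz : p 0 = z := by simp [hpdef]
  have hpfr : ∀ t : ℝ, -1 ≤ t → t ≤ 0 → p t ∈ frontier D := by
    intro t h1 h0
    have hmem : p t ∈ D := by
      have hco : p t = (1 + t) • z + (-t) • w := by
        simp only [hpdef, hEdef, Complex.real_smul]
        push_cast
        ring
      rw [hco]
      exact hDconv hzD hwD (by linarith) (by linarith) (by ring)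
    have hLp : L (p t) = L z := by
      simp only [hpdef, hEdef, _root_.map_add, _root_.map_smul, _root_.map_sub, smul_eq_mul]
      rw [hLw]
      ring
    rw [hDcl.frontier_eq]
    exact ⟨hmem, fun hin => absurd hLp (ne_of_lt (hint _ hin))⟩
  have hpout : ∀ t : ℝ, 0 < t → p t ∉ D := by
    intro t ht hmem
    have hv' : ℓ (p t) = ℓ z + t * (ℓ z - ℓ w) := by
      simp only [hpdef, hEdef, _root_.map_add, _root_.map_smul, _root_.map_sub, smul_eq_mul]
      try ring
    nlinarith [hℓD (p t) hmem]
  -- hitting the sphere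
  have hcontp : Continuous p := by
    simp only [hpdef]; fun_prop
  have hEpos : 0 < ‖E‖ := norm_pos_iff.mpr hEne
  set M := (R + dist z c + 1) / ‖E‖ with hMdef
  have hMpos : 0 < M := by positivity
  have hfar : R < dist (p M) c := by
    have h2 : dist (p M) z = M * ‖E‖ := by
      simp only [hpdef, dist_self_add_left, norm_smul, Real.norm_eq_abs, abs_of_pos hMpos]
    have h3 : M * ‖E‖ = R + dist z c + 1 := div_mul_cancel₀ _ hEpos.ne'
    have hd := dist_triangle (p M) c z
    rw [dist_comm c z] at hd
    linarith [h2, h3, hd]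
  obtain ⟨T, hTmem, hTval⟩ : ∃ T ∈ Icc (0:ℝ) M, dist (p T) c = R := by
    have hivt := intermediate_value_Icc hMpos.le
      ((continuous_dist.comp (hcontp.prodMk continuous_const)).continuousOn :
        ContinuousOn (fun t => dist (p t) c) (Icc 0 M))
    have hp0d : dist (p 0) c < R := by rw [hpz]; exact mem_ball.mp hzB
    have hmem : R ∈ Icc (dist (p 0) c) (dist (p M) c) := ⟨hp0d.le, hfar.le⟩
    obtain ⟨T, hT, hTv⟩ := hivt hmem
    exact ⟨T, hT, hTv⟩
  have hp0d : dist (p 0) c < R := by rw [hpz]; exact mem_ball.mp hzB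
  have hTpos : 0 < T := by
    rcases hTmem.1.lt_or_eq with h | h
    · exact h
    · exfalso; rw [← h] at hTval; rw [hTval] at hp0d; exact lt_irrefl _ hp0d
  set q := p T with hqdef
  have hqsph : q ∈ sphere c R := by
    rw [mem_sphere]; exact hTval
  have hqD : q ∉ D := by
    intro h
    have := mem_ball.mp (hDB h)
    rw [hTval] at this
    exact lt_irrefl _ this
  have hballm : ∀ t : ℝ, 0 ≤ t → t < T → p t ∈ ball c R := by
    intro t h0 hT
    have hco : p t = (1 - t/T) • z + (t/T) • q := by
      simp only [hpdef, hqdef, Complex.real_smul]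
      push_cast
      have : (T:ℂ) ≠ 0 := by exact_mod_cast Complex.ofReal_ne_zero.mpr hTpos.ne'
      field_simp
      ring
    have hmem := (convex_closedBall c R).combo_interior_closure_mem_interior
      (x := z) (y := q) ?_ ?_ (a := 1 - t/T) (b := t/T) ?_ ?_ ?_
    · rw [interior_closedBall c hR.ne'] at hmem
      rwa [← hco] at hmem
    · rw [interior_closedBall c hR.ne']; exact hzB
    · exact subset_closure (sphere_subset_closedBall hqsph)
    · have : t / T < 1 := (div_lt_one hTpos).mpr hT
      linarith
    · positivity
    · ring
  obtain ⟨δ₀, hδ₀pos, hδ₀⟩ : ∃ δ > 0, ∀ t : ℝ, |t| < δ → p t ∈ V := by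
    have hmem : p ⁻¹' V ∈ 𝓝 (0:ℝ) := by
      apply (hVo.preimage hcontp).mem_nhds
      simp only [mem_preimage, hpz]
      exact hzV
    rcases Metric.mem_nhds_iff.mp hmem with ⟨δ, hδ, hsub⟩
    exact ⟨δ, hδ, fun t ht => hsub (by simpa [Real.dist_eq] using ht)⟩
  set δ := min δ₀ 1 with hδdef
  have hδpos : 0 < δ := lt_min hδ₀pos one_pos
  have hδ1 : δ ≤ 1 := min_le_right _ _
  have hδδ₀ : δ ≤ δ₀ := min_le_left _ _
  set Iset := Ioo (-δ) T with hIsetdef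
  have hIU : ∀ t ∈ Iset, p t ∈ U := by
    rintro t ⟨ht1, ht2⟩
    rcases le_or_gt t 0 with h | h
    · left
      apply hδ₀
      rw [abs_of_nonpos h]
      linarith
    · right
      exact ⟨hballm t h.le ht2, hpout t h⟩
  have hφ0 : ∀ t : ℝ, -δ < t → t ≤ 0 → v (p t) = 0 := by
    intro t h1 h2
    apply hfv _ (hpfr t (by linarith) h2)
    apply hδ₀
    rw [abs_of_nonpos h2]
    linarith
  have hganal := gF_analytic hUo hv2 hvlap
  set ψ : ℝ → ℝ := fun t => (E * gF v (p t)).re with hψdef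
  have hψa : ∀ t ∈ Iset, AnalyticAt ℝ ψ t := by
    intro t ht
    have hpa : AnalyticAt ℝ p t := by
      apply AnalyticAt.add
      · exact analyticAt_const
      · exact analyticAt_id.smul analyticAt_const
    have hga : AnalyticAt ℝ (gF v) (p t) := (hganal _ (hIU t ht)).restrictScalars
    have h1 : AnalyticAt ℝ (fun s : ℝ => gF v (p s)) t := hga.comp hpa
    have h2 : AnalyticAt ℝ (fun s : ℝ => E * gF v (p s)) t := analyticAt_const.mul h1
    exact (Complex.reCLM.analyticAt _).comp h2
  have hφd : ∀ t ∈ Iset, HasDerivAt (fun s => v (p s)) (ψ t) t := by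
    intro t ht
    have hdp : HasDerivAt p E t := by
      have h1 : HasDerivAt (fun s : ℝ => s • E) ((1:ℝ) • E) t := (hasDerivAt_id t).smul_const E
      have h2 := h1.const_add z
      simpa [hpdef] using h2
    have hvd : DifferentiableAt ℝ v (p t) :=
      (hv2.differentiableOn (by norm_num)).differentiableAt (hUo.mem_nhds (hIU t ht))
    have h3 := hvd.hasFDerivAt.comp_hasDerivAt t hdp
    have h4 : fderiv ℝ v (p t) E = ψ t := by
      rw [dir_eq v (p t) E]
    rw [← h4]
    exact h3
  have hψ0 : EqOn ψ 0 Iset := by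
    apply AnalyticOnNhd.eqOn_zero_of_preconnected_of_eventuallyEq_zero
      (fun t ht => hψa t ht) isPreconnected_Ioo (z₀ := -δ/2)
      ⟨by linarith, by linarith⟩
    have hmem : Ioo (-δ) (0:ℝ) ∈ 𝓝 (-δ/2 : ℝ) :=
      isOpen_Ioo.mem_nhds ⟨by linarith, by linarith⟩
    filter_upwards [hmem] with t ht
    obtain ⟨ht1, ht2⟩ := ht
    have htI : t ∈ Iset := ⟨ht1, lt_trans ht2 hTpos⟩
    have h1 : HasDerivAt (fun s => v (p s)) 0 t := by
      apply (hasDerivAt_const t (0:ℝ)).congr_of_eventuallyEq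
      have hmem2 : Ioo (-δ) (0:ℝ) ∈ 𝓝 t := isOpen_Ioo.mem_nhds ⟨ht1, ht2⟩
      filter_upwards [hmem2] with s hs
      exact hφ0 s hs.1 hs.2.le
    exact (hφd t htI).unique h1
  have hφvan : ∀ t : ℝ, 0 < t → t < T → v (p t) = 0 := by
    intro t ht0 htT
    have hsub : Icc (-δ/2) t ⊆ Iset := fun s hs =>
      ⟨by simp only [mem_Icc] at hs; linarith [hs.1], lt_of_le_of_lt hs.2 htT⟩
    have key := eq_of_has_deriv_right_eq (f := fun s => v (p s)) (f' := fun _ => (0:ℝ))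
      (g := fun _ => (0:ℝ)) (a := -δ/2) (b := t)
      (fun x hx => by
        have hxI : x ∈ Iset := hsub (Ico_subset_Icc_self hx)
        have h := hφd x hxI
        rw [show ψ x = 0 from hψ0 hxI] at h
        exact h.hasDerivWithinAt)
      (fun x hx => hasDerivWithinAt_const _ _ _)
      (fun x hx => ((hφd x (hsub hx)).continuousAt).continuousWithinAt)
      continuousOn_const
      (hφ0 (-δ/2) (by linarith) (by linarith))
    exact key t ⟨by linarith, le_rfl⟩
  -- final contradiction
  have hq0 : u q = 0 := by
    have hqS : q ∈ closure (ball c R) \ interior D :=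
      ⟨by rw [closure_ball c hR.ne']; exact sphere_subset_closedBall hqsph,
       fun h => hqD (interior_subset h)⟩
    have hIooT : Ioo (0:ℝ) T ∈ 𝓝[<] T := Ioo_mem_nhdsLT_of_mem ⟨hTpos, le_rfl⟩
    have hmemS : ∀ᶠ t in 𝓝[<] T, p t ∈ closure (ball c R) \ interior D := by
      filter_upwards [hIooT] with t ht
      exact ⟨subset_closure (hballm t ht.1.le ht.2), fun h => hpout t ht.1 (interior_subset h)⟩
    have htp : Tendsto p (𝓝[<] T) (𝓝 q) := (hcontp.tendsto T).mono_left nhdsWithin_le_nhds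
    have h1 : Tendsto (fun t => u (p t)) (𝓝[<] T) (𝓝 (u q)) :=
      (huc q hqS).tendsto.comp (tendsto_nhdsWithin_iff.mpr ⟨htp, hmemS⟩)
    have h2 : (fun t => u (p t)) =ᶠ[𝓝[<] T] (fun _ => (0:ℝ)) := by
      filter_upwards [hIooT] with t ht
      rw [← hvu ⟨hballm t ht.1.le ht.2, hpout t ht.1⟩]
      exact hφvan t ht.1 ht.2
    exact tendsto_nhds_unique (h1.congr' h2) tendsto_const_nhds
  apply hfnz q hqsph
  rw [← huf q hqsph]
  exact hq0
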